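/- For any open set Ω ⊆ ℝ^n, the union of the supports of all compactly supported generalized points of Ω equals the topological closure of Ω in ℝ^n: ⋃_{p ∈ Ω̃_c} supp(p) = closure(Ω). -/
import Mathlib


open Set

/-!
STATEMENT 15: For any open set `Ω ⊆ ℝ^n`, the union of the supports of all compactly
supported generalized points of `Ω` equals the topological closure of `Ω` in `ℝ^n`:
`⋃_{p ∈ Ω̃_c} supp p = closure Ω`.  (Since the support is independent of the representative,
the union is taken over all bounded nets whose values lie in `Ω` eventually.)
-/

/-- A property `P` of `ε` holds *eventually* if it holds for all `ε` in some interval `(0, η]`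
with `η ∈ (0,1]`. -/
def Ev (P : ℝ → Prop) : Prop :=
  ∃ η : ℝ, 0 < η ∧ η ≤ 1 ∧ ∀ ε : ℝ, 0 < ε → ε ≤ η → P ε

/-- The support of a net: the intersection over `η ∈ (0,1]` of the closures of the tails. -/
def suppP {n : ℕ} (p : ℝ → EuclideanSpace ℝ (Fin n)) : Set (EuclideanSpace ℝ (Fin n)) :=
  ⋂ η ∈ Ioc (0:ℝ) 1, closure (p '' Ioc 0 η)

theorem union_supports_eq_closure (n : ℕ) (Ω : Set (EuclideanSpace ℝ (Fin n)))
    (hΩ : IsOpen Ω) :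
    ⋃ p ∈ {p : ℝ → EuclideanSpace ℝ (Fin n) |
        (∃ C : ℝ, ∀ ε ∈ Ioc (0:ℝ) 1, ‖p ε‖ ≤ C) ∧ Ev fun ε => p ε ∈ Ω},
      suppP p = closure Ω := by
  apply Subset.antisymm
  · intro x hx
    simp only [mem_iUnion, mem_setOf_eq] at hx
    obtain ⟨p, ⟨⟨C, hC⟩, η, hη0, hη1, hP⟩, hx⟩ := hx
    have h1 : x ∈ closure (p '' Ioc 0 η) :=
      mem_iInter₂.mp hx η ⟨hη0, hη1⟩
    refine closure_mono ?_ h1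
    rintro z ⟨ε, ⟨hε0, hεη⟩, rfl⟩
    exact hP ε hε0 hεη
  · intro x hx
    have hchoice : ∀ ε : ℝ, 0 < ε → ∃ z ∈ Ω, dist x z < ε := fun ε hε =>
      Metric.mem_closure_iff.mp hx ε hε
    choose! y hyΩ hyd using hchoice
    have hsupp : x ∈ suppP y := by
      refine mem_iInter₂.mpr fun η hη => Metric.mem_closure_iff.mpr fun δ hδ => ?_
      have hpos : 0 < min η δ := lt_min hη.1 hδ
      refine ⟨y (min η δ), ⟨min η δ, ⟨hpos, min_le_left _ _⟩, rfl⟩, ?_⟩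
      exact lt_of_lt_of_le (hyd _ hpos) (min_le_right _ _)
    refine mem_iUnion₂.mpr ⟨y, ⟨⟨‖x‖ + 1, fun ε hε => ?_⟩,
      ⟨1, one_pos, le_refl 1, fun ε hε _ => hyΩ ε hε⟩⟩, hsupp⟩
    calc ‖y ε‖ = dist (y ε) 0 := (dist_zero_right _).symm
      _ ≤ dist (y ε) x + dist x 0 := dist_triangle _ _ _
      _ = dist x (y ε) + ‖x‖ := by rw [dist_comm, dist_zero_right]
      _ ≤ 1 + ‖x‖ := by
          have := hyd ε hε.1
          linarith [le_trans (le_of_lt this) hε.2]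
      _ = ‖x‖ + 1 := by ring
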